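/- Let V be a UM-potential with deg(V,0) = 2 and W = (V_*)⁻¹ as above. Let γ ≥ 0 and γ̄ ≥ 0, not both zero, and define U(x) = γ·W'(x) + γ̄·W'(−x); one has γ·a(θ) + γ̄·ā(θ) = (1/√2)·∫₀¹ U(√θ·s)/√(1−s²) ds for every θ > 0. Suppose the function θ ↦ γ·a(θ) + γ̄·ā(θ) on (0,∞) admits a real-analytic extension to an open neighborhood of [0,∞). Then U is an even function; if, in addition, V is not even, then γ = γ̄. -/

import Mathlib

open MeasureTheory Set Filter FormalMultilinearSeries
open scoped NNReal ENNReal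

/-- A UM-potential: analytic, nonnegative, unimodal with minimum 0 at 0, tending to +∞. -/
structure IsUM (V : ℝ → ℝ) : Prop where
  analytic : ∀ x : ℝ, AnalyticAt ℝ V x
  nonneg : ∀ y : ℝ, 0 ≤ V y
  zero : V 0 = 0
  deriv_pos : ∀ y : ℝ, y ≠ 0 → 0 < y * deriv V y
  tendsto_top : Filter.Tendsto V Filter.atTop Filter.atTop
  tendsto_bot : Filter.Tendsto V Filter.atBot Filter.atTop

/-- The degree of `V` at `0`: the least `m ≥ 1` with nonzero `m`-th derivative at `0`. -/
noncomputable def degAt0 (V : ℝ → ℝ) : ℕ :=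
  sInf {m : ℕ | 1 ≤ m ∧ iteratedDeriv m V 0 ≠ 0}

/-- The inverse of the positive branch of a UM-potential. -/
noncomputable def Vinv (V : ℝ → ℝ) (θ : ℝ) : ℝ :=
  sSup {y : ℝ | 0 ≤ y ∧ V y ≤ θ}

/-- The reflected potential. -/
def reflP (V : ℝ → ℝ) : ℝ → ℝ := fun y => V (-y)

/-- `a(θ) = ∫₀^{V⁻¹(θ)} dy / (√2 √(θ - V y))`. -/
noncomputable def aFun (V : ℝ → ℝ) (θ : ℝ) : ℝ :=
  ∫ y in (0:ℝ)..(Vinv V θ), 1 / (Real.sqrt 2 * Real.sqrt (θ - V y))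

/-- `a_ξ(θ) = ∫₀^ξ dy / (√2 √(θ - V y))`. -/
noncomputable def aXi (V : ℝ → ℝ) (ξ θ : ℝ) : ℝ :=
  ∫ y in (0:ℝ)..ξ, 1 / (Real.sqrt 2 * Real.sqrt (θ - V y))

/-- The special class 𝒮𝒫. -/
def IsSP (V : ℝ → ℝ) : Prop :=
  IsUM V ∧ degAt0 V = 2 ∧
  ∃ Vstar W : ℝ → ℝ,
    (∀ x : ℝ, AnalyticAt ℝ Vstar x) ∧ (∀ x : ℝ, AnalyticAt ℝ W x) ∧
    StrictMono Vstar ∧ Function.Bijective Vstar ∧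
    (∀ x : ℝ, W (Vstar x) = x) ∧ (∀ x : ℝ, Vstar x ^ 2 = V x) ∧
    ∃ c : ℝ, c ≠ 0 ∧ ∃ f : ℝ → ℝ, (∀ x : ℝ, AnalyticAt ℝ f x) ∧
      ∀ x : ℝ, W x = c * x + f (x ^ 2)

namespace Stmt13Aux



lemma deriv_nonneg_of_mono {f : ℝ → ℝ} (hf : Monotone f) {d x : ℝ} (h : HasDerivAt f d x) :
    0 ≤ d := by
  have h1 := hasDerivAt_iff_tendsto_slope.1 h
  refine ge_of_tendsto h1 ?_
  filter_upwards [self_mem_nhdsWithin] with y hy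
  rcases lt_or_gt_of_ne (hy : y ≠ x) with hlt | hgt
  · rw [slope_def_field]
    have h1 : f y - f x ≤ 0 := by simpa using hf hlt.le
    have h2 : y - x < 0 := by linarith
    exact div_nonneg_of_nonpos h1 h2.le
  · rw [slope_def_field]
    apply div_nonneg
    · simpa using hf hgt.le
    · linarith

lemma wInt : IntegrableOn (fun s : ℝ => 1 / Real.sqrt (1 - s ^ 2)) (Ioo 0 1) := by
  have h := intervalIntegral.integrableOn_deriv_of_nonneg (g := Real.arcsin)
    (g' := fun s : ℝ => 1 / Real.sqrt (1 - s ^ 2)) (a := 0) (b := 1)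
    Real.continuous_arcsin.continuousOn
    (fun x hx => Real.hasDerivAt_arcsin (by linarith [hx.1]) (ne_of_lt hx.2))
    (fun x _ => by positivity)
  exact h.mono_set Ioo_subset_Ioc_self

lemma contMul_integrable {F : ℝ → ℝ} (hF : Continuous F) :
    IntegrableOn (fun s : ℝ => F s / Real.sqrt (1 - s ^ 2)) (Ioo 0 1) := by
  obtain ⟨C, hC⟩ := (isCompact_Icc (a := (0:ℝ)) (b := 1)).exists_bound_of_continuousOn
    hF.continuousOn
  have h := wInt.bdd_mul (f := F) (c := C) hF.aestronglyMeasurable.restrict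
    ((ae_restrict_iff' measurableSet_Ioo).2 (ae_of_all _ fun x hx =>
      hC x (Ioo_subset_Icc_self hx)))
  simpa [IntegrableOn, mul_one_div, div_eq_mul_inv] using h

/-- The moments of the weight `1/√(1-s²)`. -/
noncomputable def mInt (n : ℕ) : ℝ := ∫ s in Ioo (0:ℝ) 1, s ^ n / Real.sqrt (1 - s ^ 2)

lemma mInt_pos (n : ℕ) : 0 < mInt n := by
  have hii : IntervalIntegrable (fun s : ℝ => s ^ n / Real.sqrt (1 - s ^ 2)) volume 0 1 := by
    rw [intervalIntegrable_iff_integrableOn_Ioo_of_le zero_le_one]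
    exact contMul_integrable (continuous_pow n)
  have h := intervalIntegral.intervalIntegral_pos_of_pos_on hii (fun x hx => by
    have h2 : (0:ℝ) < Real.sqrt (1 - x ^ 2) := Real.sqrt_pos.2 (by nlinarith [hx.1, hx.2])
    exact div_pos (pow_pos hx.1 n) h2) one_pos
  rw [intervalIntegral.integral_of_le zero_le_one, integral_Ioc_eq_integral_Ioo] at h
  exact h

lemma mInt_nonneg (n : ℕ) : 0 ≤ mInt n := (mInt_pos n).le

lemma mInt_le (n : ℕ) : mInt n ≤ mInt 0 := by
  apply setIntegral_mono_on (contMul_integrable (continuous_pow n))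
    (contMul_integrable (continuous_pow 0)) measurableSet_Ioo
  intro x hx
  have hd : (0:ℝ) < Real.sqrt (1 - x ^ 2) := Real.sqrt_pos.2 (by nlinarith [hx.1, hx.2])
  have hx1 : x ^ n ≤ 1 := pow_le_one₀ hx.1.le hx.2.le
  simp only [pow_zero]
  gcongr

/-- Change of variables for a strictly monotone global diffeomorphism. -/
lemma cov_strictMono {f f' : ℝ → ℝ} (hm : StrictMono f) (hsurj : Function.Surjective f)
    (hd : ∀ x, HasDerivAt f (f' x) x) (a b : ℝ) (G : ℝ → ℝ) :
    ∫ y in Ioo (f a) (f b), G y = ∫ x in Ioo a b, |f' x| • G (f x) := by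
  have himg : f '' Ioo a b = Ioo (f a) (f b) := by
    have := (StrictMono.orderIsoOfSurjective f hm hsurj).image_Ioo a b
    simpa using this
  rw [← himg]
  exact integral_image_eq_integral_abs_deriv_smul measurableSet_Ioo
    (fun x _ => (hd x).hasDerivWithinAt) hm.injective.injOn G



lemma le_radius_of_le {c : ℕ → ℝ} {q : FormalMultilinearSeries ℝ ℝ ℝ} {r : ℝ≥0}
    (hml : ∀ n, ‖c n‖ ≤ ‖q n‖) (hr : (r : ℝ≥0∞) ≤ q.radius) :
    (r : ℝ≥0∞) ≤ (FormalMultilinearSeries.ofScalars ℝ c).radius := by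
  apply ENNReal.le_of_forall_nnreal_lt
  intro r' hr'
  apply FormalMultilinearSeries.le_radius_of_summable_norm
  have hs : Summable fun n => ‖q n‖ * (r' : ℝ) ^ n :=
    q.summable_norm_mul_pow (lt_of_lt_of_le hr' hr)
  refine Summable.of_nonneg_of_le (fun n => by positivity) (fun n => ?_) hs
  rw [FormalMultilinearSeries.ofScalars_norm]
  gcongr
  exact hml n

lemma memball_norm {y : ℝ} {r : ℝ≥0} (hy : y ∈ Metric.eball (0:ℝ) r) : ‖y‖ < r := by
  rw [Metric.mem_eball, edist_zero_right, ← ofReal_norm] at hy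
  exact_mod_cast (ENNReal.ofReal_lt_coe_iff (norm_nonneg _)).1 hy

lemma norm_memball {y : ℝ} {r : ℝ≥0} (hy : ‖y‖ < r) : y ∈ Metric.eball (0:ℝ) r := by
  rw [Metric.mem_eball, edist_zero_right, ← ofReal_norm]
  exact (ENNReal.ofReal_lt_coe_iff (norm_nonneg _)).2 hy

/-- Replace a 1-D power series by its scalar avatar, on a smaller ball. -/
lemma ofScalars_rep {f : ℝ → ℝ} {p : FormalMultilinearSeries ℝ ℝ ℝ} {R : ℝ≥0∞} {r : ℝ≥0}
    (hr : 0 < r) (hrR : (r : ℝ≥0∞) < R) (h : HasFPowerSeriesOnBall f p 0 R) :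
    HasFPowerSeriesOnBall f (FormalMultilinearSeries.ofScalars ℝ p.coeff) 0 r := by
  have hcoeff : ∀ n, ‖p.coeff n‖ ≤ ‖p n‖ := by
    intro n
    have h2 := (p n).le_opNorm (fun _ => (1:ℝ))
    simp only [norm_one, Finset.prod_const_one, mul_one] at h2
    exact h2
  refine ⟨le_radius_of_le hcoeff (le_of_lt (lt_of_lt_of_le hrR h.r_le)), by exact_mod_cast hr, ?_⟩
  intro y hy
  have hy' : y ∈ EMetric.ball (0:ℝ) R := lt_trans hy hrR
  have h1 := h.hasSum hy'
  refine h1.congr_fun fun n => ?_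
  rw [FormalMultilinearSeries.ofScalars_apply_eq, p.apply_eq_pow_smul_coeff,
    smul_eq_mul, smul_eq_mul, mul_comm]

/-- Composition with `-x` for scalar series. -/
lemma ofScalars_neg {f : ℝ → ℝ} {c : ℕ → ℝ} {r : ℝ≥0}
    (h : HasFPowerSeriesOnBall f (FormalMultilinearSeries.ofScalars ℝ c) 0 r) :
    HasFPowerSeriesOnBall (fun x => f (-x))
      (FormalMultilinearSeries.ofScalars ℝ (fun n => (-1) ^ n * c n)) 0 r := by
  refine ⟨le_radius_of_le (fun n => ?_) h.r_le, h.r_pos, ?_⟩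
  · rw [FormalMultilinearSeries.ofScalars_norm]
    simp [abs_mul]
  · intro y hy
    have hy' : -y ∈ EMetric.ball (0:ℝ) r := by
      apply norm_memball; simpa using memball_norm hy
    have h1 := h.hasSum hy'
    simp only [zero_add] at h1 ⊢
    refine h1.congr_fun fun n => ?_
    rw [FormalMultilinearSeries.ofScalars_apply_eq, FormalMultilinearSeries.ofScalars_apply_eq]
    rw [neg_pow]
    simp [smul_eq_mul]; ring

/-- Difference of scalar series. -/
lemma ofScalars_sub {f g : ℝ → ℝ} {c d : ℕ → ℝ} {r : ℝ≥0}
    (hf : HasFPowerSeriesOnBall f (FormalMultilinearSeries.ofScalars ℝ c) 0 r)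
    (hg : HasFPowerSeriesOnBall g (FormalMultilinearSeries.ofScalars ℝ d) 0 r) :
    HasFPowerSeriesOnBall (fun x => f x - g x)
      (FormalMultilinearSeries.ofScalars ℝ (fun n => c n - d n)) 0 r := by
  refine ⟨?_, hf.r_pos, ?_⟩
  · apply ENNReal.le_of_forall_nnreal_lt
    intro r' hr'
    apply FormalMultilinearSeries.le_radius_of_summable_norm
    have hs1 := (FormalMultilinearSeries.ofScalars ℝ c).summable_norm_mul_pow
      (lt_of_lt_of_le hr' hf.r_le)
    have hs2 := (FormalMultilinearSeries.ofScalars ℝ d).summable_norm_mul_pow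
      (lt_of_lt_of_le hr' hg.r_le)
    refine Summable.of_nonneg_of_le (fun n => by positivity) (fun n => ?_) (hs1.add hs2)
    rw [FormalMultilinearSeries.ofScalars_norm]
    rw [FormalMultilinearSeries.ofScalars_norm, FormalMultilinearSeries.ofScalars_norm]
    rw [← add_mul]
    gcongr
    exact norm_sub_le _ _
  · intro y hy
    have h1 := (hf.hasSum hy).sub (hg.hasSum hy)
    refine h1.congr_fun fun n => ?_
    rw [FormalMultilinearSeries.ofScalars_apply_eq, FormalMultilinearSeries.ofScalars_apply_eq,
      FormalMultilinearSeries.ofScalars_apply_eq]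
    simp [smul_eq_mul]; ring

lemma zero_of_ofScalars {f : ℝ → ℝ} {c : ℕ → ℝ} {r : ℝ≥0}
    (h : HasFPowerSeriesOnBall f (FormalMultilinearSeries.ofScalars ℝ c) 0 r)
    (hc : ∀ n, c n = 0) : ∀ᶠ x in nhds (0:ℝ), f x = 0 := by
  have hball : Metric.ball (0:ℝ) r ∈ nhds (0:ℝ) :=
    Metric.ball_mem_nhds _ (by exact_mod_cast h.r_pos)
  filter_upwards [hball] with y hy
  have hy' : y ∈ EMetric.ball (0:ℝ) r := by
    apply norm_memball; simpa [Real.norm_eq_abs, Metric.mem_ball, dist_zero_right] using hy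
  have h1 := h.hasSum hy'
  simp only [zero_add] at h1
  have h2 : (fun n => (FormalMultilinearSeries.ofScalars ℝ c) n fun _ => y) = fun _ => (0:ℝ) := by
    funext n
    rw [FormalMultilinearSeries.ofScalars_apply_eq, hc n, zero_smul]
  rw [h2] at h1
  exact h1.unique hasSum_zero



lemma transform_hasFPS {U : ℝ → ℝ} {p : FormalMultilinearSeries ℝ ℝ ℝ} {R : ℝ≥0∞} {r : ℝ≥0}
    (hr : 0 < r) (hrR : (r : ℝ≥0∞) < R) (hU : HasFPowerSeriesOnBall U p 0 R) :
    HasFPowerSeriesOnBall (fun t => ∫ s in Ioo (0:ℝ) 1, U (t * s) / Real.sqrt (1 - s ^ 2))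
      (FormalMultilinearSeries.ofScalars ℝ (fun n => p.coeff n * mInt n)) 0 r := by
  have hrad : (r : ℝ≥0∞) < p.radius := lt_of_lt_of_le hrR hU.r_le
  have hcoeff : ∀ n, ‖p.coeff n‖ ≤ ‖p n‖ := by
    intro n
    have h2 := (p n).le_opNorm (fun _ => (1:ℝ))
    simp only [norm_one, Finset.prod_const_one, mul_one] at h2
    exact h2
  have hbnd : ∀ n, ‖p.coeff n * mInt n‖ ≤ ‖p n‖ * mInt 0 := by
    intro n
    rw [norm_mul, Real.norm_of_nonneg (mInt_nonneg n)]
    exact mul_le_mul (hcoeff n) (mInt_le n) (mInt_nonneg n) (norm_nonneg _)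
  constructor
  · apply ENNReal.le_of_forall_nnreal_lt
    intro r' hr'
    apply FormalMultilinearSeries.le_radius_of_summable_norm
    have hs : Summable fun n => mInt 0 * (‖p n‖ * (r' : ℝ) ^ n) :=
      (p.summable_norm_mul_pow (lt_trans hr' hrad)).mul_left _
    refine Summable.of_nonneg_of_le (fun n => by positivity) (fun n => ?_) hs
    rw [FormalMultilinearSeries.ofScalars_norm]
    calc ‖p.coeff n * mInt n‖ * (r' : ℝ) ^ n ≤ (‖p n‖ * mInt 0) * (r' : ℝ) ^ n := by
          gcongr
          exact hbnd n
      _ = mInt 0 * (‖p n‖ * (r' : ℝ) ^ n) := by ring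
  · exact_mod_cast hr
  · intro y hy
    have hynorm : ‖y‖ < r := memball_norm hy
    have hyrad : (‖y‖₊ : ℝ≥0∞) < p.radius := by
      refine lt_trans ?_ hrad
      exact_mod_cast hynorm
    have hsnorm : Summable fun n => ‖p n‖ * ‖y‖ ^ n := by
      have := p.summable_norm_mul_pow hyrad
      simpa [coe_nnnorm] using this
    set c : ℕ → ℝ := fun n => p.coeff n * y ^ n with hc
    have habs : ∀ n, ‖c n‖ ≤ ‖p n‖ * ‖y‖ ^ n := by
      intro n
      rw [hc, norm_mul, norm_pow]
      gcongr
      exact hcoeff n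
    have hsum_c : Summable fun n => ‖c n‖ :=
      Summable.of_nonneg_of_le (fun n => norm_nonneg _) habs hsnorm
    have key : (∫ s in Ioo (0:ℝ) 1, U (y * s) / Real.sqrt (1 - s ^ 2))
        = ∑' n, c n * mInt n := by
      have heq : EqOn (fun s => U (y * s) / Real.sqrt (1 - s ^ 2))
          (fun s => ∑' n, c n * (s ^ n / Real.sqrt (1 - s ^ 2))) (Ioo 0 1) := by
        intro s hs
        have hsmem : (y * s : ℝ) ∈ EMetric.ball (0:ℝ) R := by
          refine lt_trans ?_ hrR
          apply norm_memball
          calc ‖y * s‖ = ‖y‖ * ‖s‖ := norm_mul _ _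
            _ ≤ ‖y‖ * 1 := by
                gcongr
                rw [Real.norm_eq_abs, abs_of_pos hs.1]
                exact hs.2.le
            _ = ‖y‖ := mul_one _
            _ < r := hynorm
        have h1 := hU.hasSum hsmem
        simp only [zero_add] at h1
        have h1' : HasSum (fun n => c n * s ^ n) (U (y * s)) := by
          refine h1.congr_fun fun n => ?_
          rw [p.apply_eq_pow_smul_coeff, smul_eq_mul, hc]
          ring
        have h2 := (h1'.div_const (Real.sqrt (1 - s ^ 2))).tsum_eq
        show U (y * s) / Real.sqrt (1 - s ^ 2) = ∑' n, c n * (s ^ n / Real.sqrt (1 - s ^ 2))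
        rw [← h2]
        congr 1
        funext n
        rw [mul_div_assoc]
      rw [setIntegral_congr_fun measurableSet_Ioo heq]
      have hmeas : ∀ n : ℕ, AEStronglyMeasurable
          (fun s : ℝ => c n * (s ^ n / Real.sqrt (1 - s ^ 2)))
          (volume.restrict (Ioo (0:ℝ) 1)) := by
        intro n
        apply Measurable.aestronglyMeasurable
        exact ((measurable_id.pow_const n).div
          ((Real.continuous_sqrt.comp (continuous_const.sub (continuous_pow 2))).measurable)).const_mul _
      have hfin : (∑' n : ℕ, ∫⁻ s in Ioo (0:ℝ) 1,
          ‖c n * (s ^ n / Real.sqrt (1 - s ^ 2))‖₊) ≠ ∞ := by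
        have hΛ : (∫⁻ s in Ioo (0:ℝ) 1, (‖1 / Real.sqrt (1 - s ^ 2)‖₊ : ℝ≥0∞)) < ∞ := wInt.2
        set Λ := ∫⁻ s in Ioo (0:ℝ) 1, (‖1 / Real.sqrt (1 - s ^ 2)‖₊ : ℝ≥0∞) with hΛdef
        have hbound : ∀ n : ℕ, (∫⁻ s in Ioo (0:ℝ) 1,
            ‖c n * (s ^ n / Real.sqrt (1 - s ^ 2))‖₊) ≤ (‖c n‖₊ : ℝ≥0∞) * Λ := by
          intro n
          calc (∫⁻ s in Ioo (0:ℝ) 1, (‖c n * (s ^ n / Real.sqrt (1 - s ^ 2))‖₊ : ℝ≥0∞))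
              = (‖c n‖₊ : ℝ≥0∞) * ∫⁻ s in Ioo (0:ℝ) 1,
                  (‖s ^ n / Real.sqrt (1 - s ^ 2)‖₊ : ℝ≥0∞) := by
                simp_rw [nnnorm_mul, ENNReal.coe_mul]
                rw [lintegral_const_mul' _ _ ENNReal.coe_ne_top]
            _ ≤ (‖c n‖₊ : ℝ≥0∞) * Λ := by
                gcongr
                rw [hΛdef]
                apply lintegral_mono_ae
                filter_upwards [ae_restrict_mem measurableSet_Ioo] with s hs
                have hd : (0:ℝ) < Real.sqrt (1 - s ^ 2) :=
                  Real.sqrt_pos.2 (by nlinarith [hs.1, hs.2])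
                have h4 : ‖s ^ n / Real.sqrt (1 - s ^ 2)‖ ≤ ‖1 / Real.sqrt (1 - s ^ 2)‖ := by
                  rw [Real.norm_eq_abs, Real.norm_eq_abs, abs_div, abs_div,
                    abs_of_pos hd, abs_one]
                  gcongr
                  rw [abs_pow, abs_of_pos hs.1]
                  exact pow_le_one₀ hs.1.le hs.2.le
                exact_mod_cast h4
        have hle : (∑' n : ℕ, ∫⁻ s in Ioo (0:ℝ) 1,
            (‖c n * (s ^ n / Real.sqrt (1 - s ^ 2))‖₊ : ℝ≥0∞))
            ≤ (∑' n : ℕ, (‖c n‖₊ : ℝ≥0∞)) * Λ :=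
          (ENNReal.tsum_le_tsum hbound).trans_eq ENNReal.tsum_mul_right
        refine ne_top_of_le_ne_top ?_ hle
        apply ENNReal.mul_ne_top _ hΛ.ne
        rw [ENNReal.tsum_coe_ne_top_iff_summable]
        apply NNReal.summable_coe.1
        simpa [coe_nnnorm] using hsum_c
      rw [integral_tsum hmeas hfin]
      congr 1
      funext n
      rw [integral_const_mul]
      rfl
    have hsum2 : Summable fun n => p.coeff n * mInt n * y ^ n := by
      apply Summable.of_norm
      refine Summable.of_nonneg_of_le (fun n => norm_nonneg _) (fun n => ?_)
        (hsnorm.mul_left (mInt 0))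
      rw [norm_mul]
      calc ‖p.coeff n * mInt n‖ * ‖y ^ n‖ ≤ (‖p n‖ * mInt 0) * ‖y‖ ^ n := by
            rw [norm_pow]
            gcongr
            exact hbnd n
        _ = mInt 0 * (‖p n‖ * ‖y‖ ^ n) := by ring
    have h5 := hsum2.hasSum
    have h6 : (∑' n, p.coeff n * mInt n * y ^ n) = ∑' n, c n * mInt n := by
      congr 1
      funext n
      rw [hc]
      ring
    rw [h6] at h5
    show HasSum _ ((fun t => ∫ s in Ioo (0:ℝ) 1, U (t * s) / Real.sqrt (1 - s ^ 2)) (0 + y))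
    simp only [zero_add]
    rw [key]
    refine h5.congr_fun fun n => ?_
    rw [FormalMultilinearSeries.ofScalars_apply_eq, smul_eq_mul]

end Stmt13Aux

open Stmt13Aux

/-- the identity `γ a + γ̄ ā = (1/√2)∫₀¹ U(√θ s)/√(1-s²) ds` for
`U(x) = γ W'(x) + γ̄ W'(-x)`; if `γ a + γ̄ ā` extends analytically to a neighborhood of
`[0,∞)`, then `U` is even, and if moreover `V` is not even, then `γ = γ̄`. -/
theorem stmt13 (V Vstar W : ℝ → ℝ) (hV : IsUM V) (hdeg : degAt0 V = 2)
    (hVs : ∀ x : ℝ, AnalyticAt ℝ Vstar x) (hW : ∀ x : ℝ, AnalyticAt ℝ W x)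
    (hmono : StrictMono Vstar) (hbij : Function.Bijective Vstar)
    (hinv : ∀ x : ℝ, W (Vstar x) = x) (hroot : ∀ x : ℝ, Vstar x ^ 2 = V x)
    (γ γb : ℝ) (hγ : 0 ≤ γ) (hγb : 0 ≤ γb) (hnz : ¬(γ = 0 ∧ γb = 0))
    (hext : ∃ (g : ℝ → ℝ) (O : Set ℝ), IsOpen O ∧ Set.Ici (0:ℝ) ⊆ O ∧
      (∀ x ∈ O, AnalyticAt ℝ g x) ∧
      ∀ θ : ℝ, 0 < θ → g θ = γ * aFun V θ + γb * aFun (reflP V) θ) :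
    (∀ θ : ℝ, 0 < θ →
      γ * aFun V θ + γb * aFun (reflP V) θ =
        (1 / Real.sqrt 2) * ∫ s in (0:ℝ)..1,
          (γ * deriv W (Real.sqrt θ * s) + γb * deriv W (-(Real.sqrt θ * s))) /
            Real.sqrt (1 - s ^ 2)) ∧
    (∀ x : ℝ, γ * deriv W (-x) + γb * deriv W x = γ * deriv W x + γb * deriv W (-x)) ∧
    ((∃ x : ℝ, V (-x) ≠ V x) → γ = γb) := by
  -- ====================  basic facts  ====================
  have hVs0 : Vstar 0 = 0 := by
    have h := hroot 0
    rw [hV.zero] at h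
    exact (pow_eq_zero_iff (two_ne_zero)).1 h
  have hWsurj : Function.Surjective W := fun y => ⟨Vstar y, hinv y⟩
  have hrinv : ∀ y, Vstar (W y) = y := by
    intro y
    obtain ⟨x, rfl⟩ := hbij.2 y
    rw [hinv]
  have hW0 : W 0 = 0 := by
    have h := hinv 0
    rwa [hVs0] at h
  have hWmono : StrictMono W := by
    intro a b hab
    obtain ⟨a', rfl⟩ := hbij.2 a
    obtain ⟨b', rfl⟩ := hbij.2 b
    rw [hinv, hinv]
    exact (hmono.lt_iff_lt).1 hab
  have hVW : ∀ x, V (W x) = x ^ 2 := fun x => by rw [← hroot (W x), hrinv]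
  have hWdiff : ∀ x, HasDerivAt W (deriv W x) x := fun x =>
    ((hW x).differentiableAt).hasDerivAt
  have hdWnn : ∀ x, 0 ≤ deriv W x := fun x =>
    deriv_nonneg_of_mono hWmono.monotone (hWdiff x)
  have hdWan : ∀ x, AnalyticAt ℝ (deriv W) x := fun x =>
    (AnalyticOnNhd.deriv (fun y _ => hW y)) x (mem_univ x)
  have hdWcont : Continuous (deriv W) :=
    continuous_iff_continuousAt.2 fun x => (hdWan x).continuousAt
  -- ====================  Vinv identities  ====================
  have hVinv : ∀ θ : ℝ, 0 < θ → Vinv V θ = W (Real.sqrt θ) := by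
    intro θ hθ
    have hset : {y : ℝ | 0 ≤ y ∧ V y ≤ θ} = Icc 0 (W (Real.sqrt θ)) := by
      ext y
      simp only [mem_setOf_eq, mem_Icc]
      constructor
      · rintro ⟨hy0, hyV⟩
        refine ⟨hy0, ?_⟩
        have h3 : 0 ≤ Vstar y := by
          rw [← hVs0]
          exact hmono.monotone hy0
        have h2 : Vstar y ^ 2 ≤ θ := by rw [hroot]; exact hyV
        have h1 : Vstar y ≤ Real.sqrt θ := (Real.le_sqrt h3 hθ.le).2 h2
        have h5 := hWmono.monotone h1
        rwa [hinv] at h5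
      · rintro ⟨hy0, hyW⟩
        refine ⟨hy0, ?_⟩
        have h1 : Vstar y ≤ Real.sqrt θ := by
          have h5 := hmono.monotone hyW
          rwa [hrinv] at h5
        have h3 : 0 ≤ Vstar y := by
          rw [← hVs0]
          exact hmono.monotone hy0
        rw [← hroot]
        nlinarith [Real.sq_sqrt hθ.le, Real.sqrt_nonneg θ]
    rw [Vinv, hset, csSup_Icc]
    rw [← hW0]
    exact hWmono.monotone (Real.sqrt_nonneg θ)
  have hVinvR : ∀ θ : ℝ, 0 < θ → Vinv (reflP V) θ = -W (-Real.sqrt θ) := by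
    intro θ hθ
    have hWneg : W (-Real.sqrt θ) ≤ 0 := by
      rw [← hW0]
      exact hWmono.monotone (neg_nonpos.2 (Real.sqrt_nonneg θ))
    have hset : {y : ℝ | 0 ≤ y ∧ reflP V y ≤ θ} = Icc 0 (-W (-Real.sqrt θ)) := by
      ext y
      simp only [reflP, mem_setOf_eq, mem_Icc]
      constructor
      · rintro ⟨hy0, hyV⟩
        refine ⟨hy0, ?_⟩
        have h2 : Vstar (-y) ^ 2 ≤ θ := by rw [hroot]; exact hyV
        have h3 : Vstar (-y) ≤ 0 := by
          rw [← hVs0]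
          exact hmono.monotone (neg_nonpos.2 hy0)
        have h4 : -Real.sqrt θ ≤ Vstar (-y) := by
          nlinarith [Real.sq_sqrt hθ.le, Real.sqrt_nonneg θ]
        have h5 := hWmono.monotone h4
        rw [hinv] at h5
        linarith
      · rintro ⟨hy0, hyW⟩
        refine ⟨hy0, ?_⟩
        have h4 : W (-Real.sqrt θ) ≤ -y := by linarith
        have h5 := hmono.monotone h4
        rw [hrinv] at h5
        have h3 : Vstar (-y) ≤ 0 := by
          rw [← hVs0]
          exact hmono.monotone (neg_nonpos.2 hy0)
        rw [← hroot]
        nlinarith [Real.sq_sqrt hθ.le, Real.sqrt_nonneg θ]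
    rw [Vinv, hset, csSup_Icc (by linarith)]
  -- ====================  change of variables  ====================
  have main1 : ∀ θ : ℝ, 0 < θ → aFun V θ =
      ∫ s in Ioo (0:ℝ) 1, deriv W (Real.sqrt θ * s) / (Real.sqrt 2 * Real.sqrt (1 - s ^ 2)) := by
    intro θ hθ
    set c := Real.sqrt θ with hcdef
    have hc : 0 < c := Real.sqrt_pos.2 hθ
    have hWc : 0 ≤ W c := by
      rw [← hW0]
      exact hWmono.monotone hc.le
    have e1 : aFun V θ = ∫ y in Ioo (0:ℝ) (W c), 1 / (Real.sqrt 2 * Real.sqrt (θ - V y)) := by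
      rw [aFun, hVinv θ hθ, intervalIntegral.integral_of_le hWc, integral_Ioc_eq_integral_Ioo]
    have e2 : (∫ y in Ioo (0:ℝ) (W c), 1 / (Real.sqrt 2 * Real.sqrt (θ - V y)))
        = ∫ x in Ioo (0:ℝ) c, |deriv W x| •
            (1 / (Real.sqrt 2 * Real.sqrt (θ - V (W x)))) := by
      have h := cov_strictMono hWmono hWsurj hWdiff 0 c
        (fun y => 1 / (Real.sqrt 2 * Real.sqrt (θ - V y)))
      rw [hW0] at h
      exact h
    have hmc : StrictMono (fun x : ℝ => c * x) :=
      fun a b hab => (mul_lt_mul_iff_right₀ hc).2 hab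
    have hsc : Function.Surjective (fun x : ℝ => c * x) := fun y =>
      ⟨y / c, by field_simp⟩
    have hdc : ∀ x : ℝ, HasDerivAt (fun x : ℝ => c * x) c x := fun x => by
      simpa using (hasDerivAt_id x).const_mul c
    have e3 : (∫ x in Ioo (0:ℝ) c, |deriv W x| •
          (1 / (Real.sqrt 2 * Real.sqrt (θ - V (W x)))))
        = ∫ s in Ioo (0:ℝ) 1, |c| • (|deriv W (c * s)| •
            (1 / (Real.sqrt 2 * Real.sqrt (θ - V (W (c * s)))))) := by
      have h := cov_strictMono hmc hsc (f' := fun _ => c) hdc 0 1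
        (fun x => |deriv W x| • (1 / (Real.sqrt 2 * Real.sqrt (θ - V (W x)))))
      simp only [mul_zero, mul_one] at h
      exact h
    rw [e1, e2, e3]
    apply setIntegral_congr_fun measurableSet_Ioo
    intro s hs
    have hd : (0:ℝ) < Real.sqrt (1 - s ^ 2) :=
      Real.sqrt_pos.2 (by nlinarith [hs.1, hs.2])
    have h2 : Real.sqrt 2 ≠ 0 := by positivity
    have hc2 : c ^ 2 = θ := Real.sq_sqrt hθ.le
    have h3 : θ - (c * s) ^ 2 = θ * (1 - s ^ 2) := by
      have : (c * s) ^ 2 = c ^ 2 * s ^ 2 := by ring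
      rw [this, hc2]
      ring
    simp only [smul_eq_mul]
    rw [abs_of_pos hc, abs_of_nonneg (hdWnn _), hVW, h3, Real.sqrt_mul hθ.le, ← hcdef]
    field_simp
  have main2 : ∀ θ : ℝ, 0 < θ → aFun (reflP V) θ =
      ∫ s in Ioo (0:ℝ) 1, deriv W (-(Real.sqrt θ * s)) /
        (Real.sqrt 2 * Real.sqrt (1 - s ^ 2)) := by
    intro θ hθ
    set c := Real.sqrt θ with hcdef
    have hc : 0 < c := Real.sqrt_pos.2 hθ
    set Wb : ℝ → ℝ := fun x => -W (-x) with hWbdef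
    have hWb0 : Wb 0 = 0 := by simp [hWbdef, hW0]
    have hWbmono : StrictMono Wb := by
      intro a b hab
      have h := hWmono (neg_lt_neg hab)
      simp only [hWbdef]
      linarith
    have hWbsurj : Function.Surjective Wb := by
      intro y
      refine ⟨-Vstar (-y), ?_⟩
      simp only [hWbdef, neg_neg, hinv]
    have hWbd : ∀ x, HasDerivAt Wb (deriv W (-x)) x := by
      intro x
      have h1 := (hWdiff (-x)).comp x (hasDerivAt_neg' x)
      have h2 := h1.neg
      have h3 : deriv W (-x) = -(deriv W (-x) * -1) := by ring
      rw [h3]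
      exact h2
    have hWbc : 0 ≤ Wb c := by
      rw [← hWb0]
      exact hWbmono.monotone hc.le
    have e1 : aFun (reflP V) θ = ∫ y in Ioo (0:ℝ) (Wb c),
        1 / (Real.sqrt 2 * Real.sqrt (θ - reflP V y)) := by
      rw [aFun, hVinvR θ hθ, intervalIntegral.integral_of_le (by simpa [hWbdef] using hWbc),
        integral_Ioc_eq_integral_Ioo]
    have e2 : (∫ y in Ioo (0:ℝ) (Wb c), 1 / (Real.sqrt 2 * Real.sqrt (θ - reflP V y)))
        = ∫ x in Ioo (0:ℝ) c, |deriv W (-x)| •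
            (1 / (Real.sqrt 2 * Real.sqrt (θ - reflP V (Wb x)))) := by
      have h := cov_strictMono hWbmono hWbsurj (f' := fun x => deriv W (-x)) hWbd 0 c
        (fun y => 1 / (Real.sqrt 2 * Real.sqrt (θ - reflP V y)))
      rw [hWb0] at h
      exact h
    have hmc : StrictMono (fun x : ℝ => c * x) :=
      fun a b hab => (mul_lt_mul_iff_right₀ hc).2 hab
    have hsc : Function.Surjective (fun x : ℝ => c * x) := fun y =>
      ⟨y / c, by field_simp⟩
    have hdc : ∀ x : ℝ, HasDerivAt (fun x : ℝ => c * x) c x := fun x => by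
      simpa using (hasDerivAt_id x).const_mul c
    have e3 : (∫ x in Ioo (0:ℝ) c, |deriv W (-x)| •
          (1 / (Real.sqrt 2 * Real.sqrt (θ - reflP V (Wb x)))))
        = ∫ s in Ioo (0:ℝ) 1, |c| • (|deriv W (-(c * s))| •
            (1 / (Real.sqrt 2 * Real.sqrt (θ - reflP V (Wb (c * s)))))) := by
      have h := cov_strictMono hmc hsc (f' := fun _ => c) hdc 0 1
        (fun x => |deriv W (-x)| • (1 / (Real.sqrt 2 * Real.sqrt (θ - reflP V (Wb x)))))
      simp only [mul_zero, mul_one] at h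
      exact h
    rw [e1, e2, e3]
    apply setIntegral_congr_fun measurableSet_Ioo
    intro s hs
    have hd : (0:ℝ) < Real.sqrt (1 - s ^ 2) :=
      Real.sqrt_pos.2 (by nlinarith [hs.1, hs.2])
    have h2 : Real.sqrt 2 ≠ 0 := by positivity
    have hc2 : c ^ 2 = θ := Real.sq_sqrt hθ.le
    have hrefl : reflP V (Wb (c * s)) = (c * s) ^ 2 := by
      simp only [reflP, hWbdef, neg_neg]
      rw [hVW]
      ring
    have h3 : θ - (c * s) ^ 2 = θ * (1 - s ^ 2) := by
      have : (c * s) ^ 2 = c ^ 2 * s ^ 2 := by ring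
      rw [this, hc2]
      ring
    simp only [smul_eq_mul]
    rw [abs_of_pos hc, abs_of_nonneg (hdWnn _), hrefl, h3, Real.sqrt_mul hθ.le, ← hcdef]
    field_simp
  -- ====================  conjunct 1  ====================
  set U : ℝ → ℝ := fun x => γ * deriv W x + γb * deriv W (-x) with hUdef
  have hUcont : Continuous U := by
    apply Continuous.add
    · exact continuous_const.mul hdWcont
    · exact continuous_const.mul (hdWcont.comp continuous_neg)
  have hi1 : ∀ t : ℝ, IntegrableOn
      (fun s : ℝ => deriv W (t * s) / Real.sqrt (1 - s ^ 2)) (Ioo 0 1) := fun t =>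
    contMul_integrable (hdWcont.comp (continuous_const.mul continuous_id))
  have hi2 : ∀ t : ℝ, IntegrableOn
      (fun s : ℝ => deriv W (-(t * s)) / Real.sqrt (1 - s ^ 2)) (Ioo 0 1) := fun t =>
    contMul_integrable (hdWcont.comp ((continuous_const.mul continuous_id).neg))
  have hi1' : ∀ t : ℝ, IntegrableOn
      (fun s : ℝ => deriv W (t * s) / (Real.sqrt 2 * Real.sqrt (1 - s ^ 2))) (Ioo 0 1) := by
    intro t
    have h := contMul_integrable (F := fun s => deriv W (t * s) / Real.sqrt 2)
      ((hdWcont.comp (continuous_const.mul continuous_id)).div_const _)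
    simpa [div_div, mul_comm] using h
  have hi2' : ∀ t : ℝ, IntegrableOn
      (fun s : ℝ => deriv W (-(t * s)) / (Real.sqrt 2 * Real.sqrt (1 - s ^ 2))) (Ioo 0 1) := by
    intro t
    have h := contMul_integrable (F := fun s => deriv W (-(t * s)) / Real.sqrt 2)
      ((hdWcont.comp ((continuous_const.mul continuous_id).neg)).div_const _)
    simpa [div_div, mul_comm] using h
  have conj1' : ∀ θ : ℝ, 0 < θ → γ * aFun V θ + γb * aFun (reflP V) θ =
      ∫ s in Ioo (0:ℝ) 1, U (Real.sqrt θ * s) / (Real.sqrt 2 * Real.sqrt (1 - s ^ 2)) := by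
    intro θ hθ
    rw [main1 θ hθ, main2 θ hθ, ← integral_const_mul, ← integral_const_mul,
      ← integral_add ((hi1' _).const_mul γ) ((hi2' _).const_mul γb)]
    congr 1
    funext s
    simp only [hUdef]
    ring
  have conj1 : ∀ θ : ℝ, 0 < θ →
      γ * aFun V θ + γb * aFun (reflP V) θ =
        (1 / Real.sqrt 2) * ∫ s in (0:ℝ)..1,
          (γ * deriv W (Real.sqrt θ * s) + γb * deriv W (-(Real.sqrt θ * s))) /
            Real.sqrt (1 - s ^ 2) := by
    intro θ hθ
    rw [conj1' θ hθ, intervalIntegral.integral_of_le zero_le_one,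
      integral_Ioc_eq_integral_Ioo, ← integral_const_mul]
    congr 1
    funext s
    simp only [hUdef]
    ring
  refine ⟨conj1, ?_⟩
  -- ====================  the analytic part  ====================
  obtain ⟨g, O, hOopen, hO0, hgan, hgval⟩ := hext
  set h : ℝ → ℝ := fun t => ∫ s in Ioo (0:ℝ) 1, U (t * s) / Real.sqrt (1 - s ^ 2) with hhdef
  have hfunc : ∀ t : ℝ, 0 < t → h t = Real.sqrt 2 * g (t ^ 2) := by
    intro t ht
    have ht2 : (0:ℝ) < t ^ 2 := by positivity
    have hg2 := hgval (t ^ 2) ht2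
    have hc1 := conj1' (t ^ 2) ht2
    rw [Real.sqrt_sq ht.le] at hc1
    have h2 : Real.sqrt 2 ≠ 0 := by positivity
    have hsplit : h t = Real.sqrt 2 *
        ∫ s in Ioo (0:ℝ) 1, U (t * s) / (Real.sqrt 2 * Real.sqrt (1 - s ^ 2)) := by
      rw [hhdef, ← integral_const_mul]
      show (∫ s in Ioo (0:ℝ) 1, U (t * s) / Real.sqrt (1 - s ^ 2))
        = ∫ s in Ioo (0:ℝ) 1, Real.sqrt 2 * (U (t * s) / (Real.sqrt 2 * Real.sqrt (1 - s ^ 2)))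
      congr 1
      funext s
      rw [mul_comm (Real.sqrt 2) (Real.sqrt (1 - s ^ 2)), ← div_div,
        mul_comm (Real.sqrt 2) (U (t * s) / Real.sqrt (1 - s ^ 2) / Real.sqrt 2),
        div_mul_cancel₀ _ h2]
    rw [hsplit, ← hc1, ← hg2]
  have hUan : ∀ x, AnalyticAt ℝ U x := by
    intro x
    apply AnalyticAt.add
    · exact analyticAt_const.mul (hdWan x)
    · apply analyticAt_const.mul
      exact AnalyticAt.comp (by simpa using hdWan (-x)) analyticAt_id.neg
  obtain ⟨p, hp⟩ := hUan 0
  obtain ⟨R, hpR⟩ := hp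
  obtain ⟨r, hr0R, hrR⟩ := ENNReal.lt_iff_exists_nnreal_btwn.1 hpR.r_pos
  have hr0 : 0 < r := by exact_mod_cast hr0R
  have hq := transform_hasFPS hr0 hrR hpR
  rw [← hhdef] at hq
  have hhan : AnalyticAt ℝ h 0 := hq.hasFPowerSeriesAt.analyticAt
  have hg0 : AnalyticAt ℝ g 0 := hgan 0 (hO0 self_mem_Ici)
  have hsq : AnalyticAt ℝ (fun t : ℝ => g (t ^ 2)) 0 := by
    have hin : AnalyticAt ℝ (fun t : ℝ => t ^ 2) 0 :=
      (analyticAt_id (𝕜 := ℝ) (z := (0:ℝ))).pow 2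
    have hg0' : AnalyticAt ℝ g ((fun t : ℝ => t ^ 2) 0) := by
      show AnalyticAt ℝ g ((0:ℝ) ^ 2)
      rw [show ((0:ℝ) ^ 2) = 0 by norm_num]
      exact hg0
    exact AnalyticAt.comp (f := fun t : ℝ => t ^ 2) (x := (0:ℝ)) hg0' hin
  have hF : AnalyticAt ℝ (fun t => h t - Real.sqrt 2 * g (t ^ 2)) 0 :=
    hhan.sub (analyticAt_const.mul hsq)
  have hfreq : ∃ᶠ z in nhdsWithin (0:ℝ) {(0:ℝ)}ᶜ,
      (fun t => h t - Real.sqrt 2 * g (t ^ 2)) z = 0 := by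
    apply Filter.Frequently.filter_mono (f := nhdsWithin (0:ℝ) (Ioi 0))
    · apply Filter.Eventually.frequently
      filter_upwards [self_mem_nhdsWithin] with z hz
      rw [hfunc z hz]
      ring
    · exact nhdsWithin_mono 0 fun x (hx : x ∈ Ioi 0) => ne_of_gt hx
  have hev := hF.frequently_zero_iff_eventually_zero.1 hfreq
  have hevh : ∀ᶠ z in nhds (0:ℝ), h z = Real.sqrt 2 * g (z ^ 2) := by
    filter_upwards [hev] with z hz
    linarith [hz]
  have hnegt : Filter.Tendsto (fun z : ℝ => -z) (nhds 0) (nhds 0) := by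
    simpa using (continuous_neg.tendsto (0:ℝ))
  have hevh' : ∀ᶠ z in nhds (0:ℝ), h (-z) = Real.sqrt 2 * g (z ^ 2) := by
    filter_upwards [hnegt.eventually hevh] with z hz
    simpa [neg_pow] using hz
  have hψev : (fun z => h z - h (-z)) =ᶠ[nhds (0:ℝ)] (fun _ => (0:ℝ)) := by
    filter_upwards [hevh, hevh'] with z h1 h2
    rw [h1, h2]
    ring
  have hqneg := ofScalars_neg hq
  have hqsub := ofScalars_sub hq hqneg
  have hψzero : HasFPowerSeriesAt (fun _ : ℝ => (0:ℝ))
      (FormalMultilinearSeries.ofScalars ℝ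
        (fun n => p.coeff n * mInt n - (-1) ^ n * (p.coeff n * mInt n))) 0 :=
    hqsub.hasFPowerSeriesAt.congr hψev
  have hdzero := HasFPowerSeriesAt.eq_zero hψzero
  have hodd : ∀ n : ℕ, Odd n → p.coeff n = 0 := by
    intro n hn
    have h1 : (FormalMultilinearSeries.ofScalars ℝ
        (fun n => p.coeff n * mInt n - (-1) ^ n * (p.coeff n * mInt n))) n = 0 := by
      rw [hdzero]
      rfl
    have h2 := FormalMultilinearSeries.ofScalars_apply_eq
      (c := fun n => p.coeff n * mInt n - (-1) ^ n * (p.coeff n * mInt n)) (1:ℝ) n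
    rw [h1] at h2
    simp only [ContinuousMultilinearMap.zero_apply, one_pow, smul_eq_mul, mul_one] at h2
    rw [Odd.neg_one_pow hn] at h2
    have h3 : p.coeff n * mInt n = 0 := by linarith
    rcases mul_eq_zero.1 h3 with h4 | h4
    · exact h4
    · exact absurd h4 (mInt_pos n).ne'
  have hp' := ofScalars_rep hr0 hrR hpR
  have hp'neg := ofScalars_neg hp'
  have hΦball := ofScalars_sub hp' hp'neg
  have hΦev : ∀ᶠ x in nhds (0:ℝ), (fun x => U x - U (-x)) x = 0 := by
    apply zero_of_ofScalars hΦball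
    intro n
    rcases Nat.even_or_odd n with he | ho
    · rw [Even.neg_one_pow he]
      ring
    · rw [hodd n ho]
      ring
  have hΦan : AnalyticOnNhd ℝ (fun x => U x - U (-x)) univ := fun x _ =>
    (hUan x).sub (AnalyticAt.comp (by simpa using hUan (-x)) analyticAt_id.neg)
  have hΦ0 : EqOn (fun x => U x - U (-x)) 0 univ :=
    hΦan.eqOn_zero_of_preconnected_of_eventuallyEq_zero isPreconnected_univ (mem_univ 0) hΦev
  have hUeven : ∀ x, U (-x) = U x := by
    intro x
    have h1 := hΦ0 (mem_univ x)
    simp only [Pi.zero_apply] at h1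
    linarith [h1]
  have conj2 : ∀ x : ℝ, γ * deriv W (-x) + γb * deriv W x =
      γ * deriv W x + γb * deriv W (-x) := by
    intro x
    have h1 := hUeven x
    simp only [hUdef, neg_neg] at h1
    linarith
  refine ⟨conj2, ?_⟩
  -- ====================  conjunct 3  ====================
  rintro ⟨x₀, hx₀⟩
  by_contra hne
  have hγne : γ - γb ≠ 0 := sub_ne_zero.2 hne
  have hdWeven : ∀ x, deriv W (-x) = deriv W x := by
    intro x
    have h1 := conj2 x
    have h3 : (γ - γb) * (deriv W (-x) - deriv W x) = 0 := by linarith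
    rcases mul_eq_zero.1 h3 with h4 | h4
    · exact absurd h4 hγne
    · linarith
  have hKdiff : Differentiable ℝ (fun x : ℝ => W x + W (-x)) := by
    intro x
    exact ((hWdiff x).add ((hWdiff (-x)).comp x (hasDerivAt_neg' x))).differentiableAt
  have hKderiv : ∀ x, deriv (fun x : ℝ => W x + W (-x)) x = 0 := by
    intro x
    have h1 : HasDerivAt (fun x : ℝ => W x + W (-x))
        (deriv W x + deriv W (-x) * (-1)) x :=
      (hWdiff x).add ((hWdiff (-x)).comp x (hasDerivAt_neg' x))
    rw [h1.deriv, hdWeven x]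
    ring
  have hWodd : ∀ x, W (-x) = -W x := by
    intro x
    have h1 := is_const_of_deriv_eq_zero hKdiff hKderiv x 0
    simp only [neg_zero, hW0, add_zero] at h1
    linarith
  have hVsodd : ∀ x, Vstar (-x) = -Vstar x := by
    intro x
    apply hWmono.injective
    rw [hinv, hWodd, hinv]
  exact hx₀ (by rw [← hroot, ← hroot, hVsodd]; ring)
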